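/- arXiv:1705.07665 — 3 statements merged into one kernel-verified Lean document; each statement's English description precedes it below -/
import Mathlib

section
/- If G is an infinite, finitely generated, elementary amenable group, then G has a subgroup of finite index which admits a surjective group homomorphism onto ℤ. -/
universe u

/-- The class of elementary amenable groups: the smallest class of groups containing all
abelian groups and all finite groups and closed under taking subgroups (more generally,
injective images), quotients (more generally, surjective images), extensions and directed
unions (inductive limits). -/
inductive ElementaryAmenable : ∀ (G : Type u) [Group G], Prop
  | of_comm (G : Type u) [Group G] (h : ∀ a b : G, a * b = b * a) : ElementaryAmenable G
  | of_finite (G : Type u) [Group G] (h : Finite G) : ElementaryAmenable G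
  | of_injective (G H : Type u) [Group G] [Group H] (f : G →* H)
      (hf : Function.Injective f) (hH : ElementaryAmenable H) : ElementaryAmenable G
  | of_surjective (G H : Type u) [Group G] [Group H] (f : G →* H)
      (hf : Function.Surjective f) (hG : ElementaryAmenable G) : ElementaryAmenable H
  | of_extension (G : Type u) [Group G] (N : Subgroup G) (hN : N.Normal)
      (h₁ : ElementaryAmenable N) (h₂ : ElementaryAmenable (G ⧸ N)) : ElementaryAmenable G
  | of_directed_union (G : Type u) [Group G] {ι : Type u} (S : ι → Subgroup G)
      (hdir : Directed (· ≤ ·) S) (hunion : ∀ g : G, ∃ i, g ∈ S i)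
      (h : ∀ i, ElementaryAmenable (S i)) : ElementaryAmenable G


open DirectSum

/-- An infinite finitely generated commutative group surjects onto `Multiplicative ℤ`. -/
theorem EAaux.comm_surj_int (K : Type u) [CommGroup K] [Infinite K] (hfg : Group.FG K) :
    ∃ f : K →* Multiplicative ℤ, Function.Surjective f := by
  have hfg' : AddGroup.FG (Additive K) := GroupFG.iff_add_fg.mp hfg
  obtain ⟨n, ι, fι, p, hp, e, ⟨eqv⟩⟩ :=
    AddCommGroup.equiv_free_prod_directSum_zmod (Additive K)
  have hfin : Finite (⨁ i : ι, ZMod (p i ^ e i)) := by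
    have : ∀ i, Finite (ZMod (p i ^ e i)) := fun i => by
      have : NeZero (p i ^ e i) := ⟨pow_ne_zero _ (hp i).pos.ne'⟩
      infer_instance
    exact Finite.of_equiv _ DFinsupp.equivFunOnFintype.symm
  have hn : n ≠ 0 := by
    rintro rfl
    have hfin2 : Finite ((Fin 0 →₀ ℤ) × ⨁ i : ι, ZMod (p i ^ e i)) := by
      have : Subsingleton (Fin 0 →₀ ℤ) := ⟨fun a b => Finsupp.ext fun i => i.elim0⟩
      infer_instance
    have : Finite K := Finite.of_equiv _ (Additive.ofMul.trans eqv.toEquiv).symm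
    exact not_finite K
  let π : (Fin n →₀ ℤ) × (⨁ i : ι, ZMod (p i ^ e i)) →+ ℤ :=
    (Finsupp.applyAddHom (⟨0, Nat.pos_of_ne_zero hn⟩ : Fin n)).comp (AddMonoidHom.fst _ _)
  have hπ : Function.Surjective π := by
    intro z
    exact ⟨(Finsupp.single ⟨0, Nat.pos_of_ne_zero hn⟩ z, 0), by simp [π]⟩
  let φ : Additive K →+ ℤ := π.comp eqv.toAddMonoidHom
  have hφ : Function.Surjective φ := hπ.comp eqv.surjective
  refine ⟨AddMonoidHom.toMultiplicativeRight φ, fun z => ?_⟩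
  obtain ⟨k, hk⟩ := hφ (Multiplicative.toAdd z)
  exact ⟨Additive.toMul k, congrArg Multiplicative.ofAdd hk⟩


/-- The restricted class: no subgroup/quotient constructors. -/
inductive EA' : ∀ (G : Type u) [Group G], Prop
  | of_comm (G : Type u) [Group G] (h : ∀ a b : G, a * b = b * a) : EA' G
  | of_finite (G : Type u) [Group G] (h : Finite G) : EA' G
  | of_extension (G : Type u) [Group G] (N : Subgroup G) (hN : N.Normal)
      (h₁ : EA' N) (h₂ : EA' (G ⧸ N)) : EA' G
  | of_directed_union (G : Type u) [Group G] {ι : Type u} (S : ι → Subgroup G)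
      (hdir : Directed (· ≤ ·) S) (hunion : ∀ g : G, ∃ i, g ∈ S i)
      (h : ∀ i, EA' (S i)) : EA' G

theorem EA'.of_injective' : ∀ (H : Type u) [Group H], EA' H →
    ∀ (G : Type u) [Group G] (f : G →* H), Function.Injective f → EA' G := by
  intro H _ hH
  induction hH with
  | of_comm H h =>
    intro G _ f hf
    exact EA'.of_comm G fun a b => hf (by rw [map_mul, map_mul, h])
  | of_finite H h =>
    intro G _ f hf
    exact EA'.of_finite G (Finite.of_injective f hf)
  | of_extension H N hN h₁ h₂ ih₁ ih₂ =>
    intro G _ f hf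
    set φ : G →* H ⧸ N := (QuotientGroup.mk' N).comp f with hφdef
    refine EA'.of_extension G φ.ker (MonoidHom.normal_ker φ) ?_ ?_
    · refine ih₁ _ (MonoidHom.codRestrict (f.comp φ.ker.subtype) N
        (fun x => (QuotientGroup.eq_one_iff _).mp (MonoidHom.mem_ker.mp x.2))) ?_
      intro a b hab
      exact Subtype.ext (hf (congrArg Subtype.val hab))
    · exact ih₂ _ (QuotientGroup.kerLift φ) (QuotientGroup.kerLift_injective φ)
  | of_directed_union H S hdir hunion h ih =>
    intro G _ f hf
    refine EA'.of_directed_union G (fun i => (S i).comap f)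
      (fun i j => (hdir i j).imp fun k hk =>
        ⟨Subgroup.comap_mono hk.1, Subgroup.comap_mono hk.2⟩)
      (fun g => hunion (f g)) (fun i => ?_)
    refine ih i _ (MonoidHom.codRestrict (f.comp ((S i).comap f).subtype) (S i)
      (fun x => x.2)) ?_
    intro a b hab
    exact Subtype.ext (hf (congrArg Subtype.val hab))

theorem EA'.of_surjective' : ∀ (G : Type u) [Group G], EA' G →
    ∀ (H : Type u) [Group H] (f : G →* H), Function.Surjective f → EA' H := by
  intro G _ hG
  induction hG with
  | of_comm G h =>
    intro H _ f hf
    refine EA'.of_comm H fun a b => ?_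
    obtain ⟨a, rfl⟩ := hf a
    obtain ⟨b, rfl⟩ := hf b
    rw [← map_mul, ← map_mul, h]
  | of_finite G h =>
    intro H _ f hf
    exact EA'.of_finite H (Finite.of_surjective f hf)
  | of_extension G N hN h₁ h₂ ih₁ ih₂ =>
    intro H _ f hf
    haveI : (N.map f).Normal := hN.map f hf
    refine EA'.of_extension H (N.map f) ‹_› ?_ ?_
    · exact ih₁ _ (f.subgroupMap N) (f.subgroupMap_surjective N)
    · set ψ : G →* H ⧸ N.map f := (QuotientGroup.mk' (N.map f)).comp f with hψdef
      have hψ : Function.Surjective ψ := by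
        intro x
        obtain ⟨y, rfl⟩ := QuotientGroup.mk'_surjective (N.map f) x
        obtain ⟨g, rfl⟩ := hf y
        exact ⟨g, rfl⟩
      have hle : N ≤ ψ.ker := fun n hn => by
        simp only [hψdef, MonoidHom.mem_ker, MonoidHom.comp_apply, QuotientGroup.mk'_apply,
          QuotientGroup.eq_one_iff]
        exact Subgroup.mem_map_of_mem f hn
      refine ih₂ _ (QuotientGroup.lift N ψ hle) ?_
      intro x
      obtain ⟨g, hg⟩ := hψ x
      exact ⟨QuotientGroup.mk g, hg⟩
  | of_directed_union G S hdir hunion h ih =>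
    intro H _ f hf
    refine EA'.of_directed_union H (fun i => (S i).map f)
      (fun i j => (hdir i j).imp fun k hk =>
        ⟨Subgroup.map_mono hk.1, Subgroup.map_mono hk.2⟩)
      (fun y => ?_) (fun i => ih i _ (f.subgroupMap (S i)) (f.subgroupMap_surjective (S i)))
    obtain ⟨g, rfl⟩ := hf y
    obtain ⟨i, hi⟩ := hunion g
    exact ⟨i, Subgroup.mem_map_of_mem f hi⟩

theorem ElementaryAmenable.toEA' : ∀ (G : Type u) [Group G],
    ElementaryAmenable G → EA' G := by
  intro G _ hG
  induction hG with
  | of_comm G h => exact EA'.of_comm G h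
  | of_finite G h => exact EA'.of_finite G h
  | of_injective G H f hf hH ih => exact EA'.of_injective' H ih G f hf
  | of_surjective G H f hf hG ih => exact EA'.of_surjective' G ih H f hf
  | of_extension G N hN h₁ h₂ ih₁ ih₂ => exact EA'.of_extension G N hN ih₁ ih₂
  | of_directed_union G S hdir hunion h ih =>
    exact EA'.of_directed_union G S hdir hunion ih

/-- The main induction. -/
theorem EA'.main : ∀ (G : Type u) [Group G], EA' G →
    ∀ (K : Type u) [Group K] (f : K →* G), Function.Injective f → Group.FG K → Infinite K →
    ∃ H : Subgroup K, H.FiniteIndex ∧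
      ∃ g : H →* Multiplicative ℤ, Function.Surjective g := by
  intro G _ hG
  induction hG with
  | of_comm G h =>
    intro K _ f hf hfg hinf
    letI : CommGroup K := { ‹Group K› with
      mul_comm := fun a b => hf (by rw [map_mul, map_mul, h]) }
    haveI := hinf
    obtain ⟨g, hg⟩ := EAaux.comm_surj_int K hfg
    refine ⟨⊤, inferInstance, g.comp (Subgroup.topEquiv).toMonoidHom, ?_⟩
    exact hg.comp Subgroup.topEquiv.surjective
  | of_finite G h =>
    intro K _ f hf hfg hinf
    exact absurd (Finite.of_injective f hf) (@not_finite K hinf)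
  | of_extension G N hN h₁ h₂ ih₁ ih₂ =>
    intro K _ f hf hfg hinf
    haveI := hfg
    set φ : K →* G ⧸ N := (QuotientGroup.mk' N).comp f with hφdef
    set R := φ.range with hRdef
    have hR : Function.Surjective φ.rangeRestrict := φ.rangeRestrict_surjective
    have hRfg : Group.FG R := Group.fg_of_surjective hR
    cases finite_or_infinite R with
    | inr hinfR =>
      obtain ⟨H₀, hH₀, g, hg⟩ := ih₂ R R.subtype R.subtype_injective hRfg hinfR
      refine ⟨H₀.comap φ.rangeRestrict, ?_, ?_⟩
      · constructor
        rw [Subgroup.index_comap_of_surjective _ hR]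
        exact hH₀.index_ne_zero
      · refine ⟨g.comp ((MonoidHom.codRestrict
          (φ.rangeRestrict.comp (H₀.comap φ.rangeRestrict).subtype) H₀
          (fun x => x.2))), hg.comp ?_⟩
        intro y
        obtain ⟨k, hk⟩ := hR y.1
        exact ⟨⟨k, by simp only [Subgroup.mem_comap, hk]; exact y.2⟩, Subtype.ext hk⟩
    | inl hfinR =>
      set M := φ.ker with hMdef
      haveI hMfi : M.FiniteIndex := by
        constructor
        rw [Subgroup.index_ker]
        exact Nat.card_ne_zero.mpr ⟨⟨1, one_mem _⟩, hfinR⟩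
      haveI hMfg : Group.FG M := inferInstance
      haveI hMinf : Infinite M := by
        by_contra hfin
        rw [not_infinite_iff_finite] at hfin
        have hcard : Nat.card K ≠ 0 := by
          rw [← M.index_mul_card]
          exact Nat.mul_ne_zero hMfi.index_ne_zero
            (Nat.card_ne_zero.mpr ⟨⟨1, one_mem _⟩, hfin⟩)
        exact @not_finite K hinf (Nat.finite_of_card_ne_zero hcard)
      have hν : Function.Injective (MonoidHom.codRestrict (f.comp M.subtype) N
          (fun x => (QuotientGroup.eq_one_iff _).mp (MonoidHom.mem_ker.mp x.2))) := by
        intro a b hab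
        exact Subtype.ext (hf (congrArg Subtype.val hab))
      obtain ⟨H₁, hH₁, g, hg⟩ := ih₁ M _ hν hMfg hMinf
      refine ⟨H₁.map M.subtype, ?_, ?_⟩
      · constructor
        have hle : H₁.map M.subtype ≤ M := Subgroup.map_subtype_le H₁
        have := Subgroup.relIndex_mul_index hle
        rw [← this]
        have hrel : (H₁.map M.subtype).relIndex M = H₁.index := by
          rw [Subgroup.relIndex, Subgroup.subgroupOf,
            Subgroup.comap_map_eq_self_of_injective M.subtype_injective]
        rw [hrel]
        exact Nat.mul_ne_zero hH₁.index_ne_zero hMfi.index_ne_zero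
      · refine ⟨g.comp ((Subgroup.equivMapOfInjective H₁ M.subtype
          M.subtype_injective).symm.toMonoidHom), ?_⟩
        exact hg.comp (Subgroup.equivMapOfInjective H₁ M.subtype
          M.subtype_injective).symm.surjective
  | of_directed_union G S hdir hunion h ih =>
    intro K _ f hf hfg hinf
    classical
    obtain ⟨T, hT⟩ := hfg.out
    haveI : Nonempty _ := (hunion 1).elim fun i _ => ⟨i⟩
    obtain ⟨i, hi⟩ := hdir.finset_le (T.image fun t => (hunion (f t)).choose)
    have hsub : ∀ k : K, f k ∈ S i := by
      have hmap : (⊤ : Subgroup K).map f ≤ S i := by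
        rw [← hT, MonoidHom.map_closure]
        refine (Subgroup.closure_le _).mpr ?_
        rintro x ⟨t, ht, rfl⟩
        exact hi _ (Finset.mem_image_of_mem _ ht) (hunion (f t)).choose_spec
      exact fun k => hmap (Subgroup.mem_map_of_mem f (Subgroup.mem_top k))
    refine ih i K (MonoidHom.codRestrict f (S i) hsub) ?_ hfg hinf
    intro a b hab
    exact hf (congrArg Subtype.val hab)

theorem exists_finiteIndex_subgroup_surjective_onto_int'
    (G : Type u) [Group G] [Infinite G] (hfg : Group.FG G) (hEA : EA' G) :
    ∃ H : Subgroup G, H.FiniteIndex ∧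
      ∃ f : H →* Multiplicative ℤ, Function.Surjective f :=
  EA'.main G hEA G (MonoidHom.id G) Function.injective_id hfg inferInstance

/-- Hillman's lemma: an infinite, finitely generated, elementary amenable group has a
finite-index subgroup admitting a surjective homomorphism onto `ℤ`. -/
theorem exists_finiteIndex_subgroup_surjective_onto_int
    (G : Type u) [Group G] [Infinite G] (hfg : Group.FG G) (hEA : ElementaryAmenable G) :
    ∃ H : Subgroup G, H.FiniteIndex ∧
      ∃ f : H →* Multiplicative ℤ, Function.Surjective f :=
  exists_finiteIndex_subgroup_surjective_onto_int' G hfg (ElementaryAmenable.toEA' G hEA)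
end

section
/- Let n ≥ 4, let ρ : S_n → ℂ ⊕ M_n(ℂ) be the direct sum of the trivial representation and the permutation representation. Then the *-algebra generated by ρ(A_n) equals the *-algebra generated by ρ(S_n), where A_n is the alternating group (the commutator subgroup of S_n). -/
open Equiv Equiv.Perm

/-- For `n ≥ 4`, letting `ρ : Sₙ → ℂ ⊕ Mₙ(ℂ)` be the direct sum of the trivial
representation and the permutation representation, the *-algebra generated by `ρ(Aₙ)`
equals the *-algebra generated by `ρ(Sₙ)`. -/
theorem starAlgebra_adjoin_alternating_eq_adjoin_symmetric (n : ℕ) (hn : 4 ≤ n) :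
    StarAlgebra.adjoin ℂ
        ((fun σ : Equiv.Perm (Fin n) => (((1 : ℂ), σ.permMatrix ℂ) : ℂ × Matrix (Fin n) (Fin n) ℂ)) ''
          (alternatingGroup (Fin n) : Set (Equiv.Perm (Fin n)))) =
      StarAlgebra.adjoin ℂ
        (Set.range fun σ : Equiv.Perm (Fin n) =>
          (((1 : ℂ), σ.permMatrix ℂ) : ℂ × Matrix (Fin n) (Fin n) ℂ)) := by
  set ρ : Equiv.Perm (Fin n) → ℂ × Matrix (Fin n) (Fin n) ℂ :=
    fun σ => ((1 : ℂ), σ.permMatrix ℂ) with hρ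
  set S := StarAlgebra.adjoin ℂ (ρ '' (alternatingGroup (Fin n) : Set (Equiv.Perm (Fin n))))
    with hS
  -- multiplicativity of ρ
  have hmul : ∀ π τ : Equiv.Perm (Fin n), ρ π * ρ τ = ρ (τ * π) := by
    intro π τ
    have : (τ * π).permMatrix ℂ = π.permMatrix ℂ * τ.permMatrix ℂ := by
      show (π.trans τ).toPEquiv.toMatrix = _
      rw [Equiv.toPEquiv_trans, PEquiv.toMatrix_trans]
    simp [hρ, Prod.ext_iff, this]
  -- membership of even permutations
  have hevens : ∀ σ : Equiv.Perm (Fin n), sign σ = 1 → ρ σ ∈ S := by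
    intro σ hσ
    exact StarAlgebra.subset_adjoin ℂ _ ⟨σ, Equiv.Perm.mem_alternatingGroup.mpr hσ, rfl⟩
  -- the four points
  have h0 : (0 : ℕ) < n := by omega
  have h1 : (1 : ℕ) < n := by omega
  have h2 : (2 : ℕ) < n := by omega
  have h3 : (3 : ℕ) < n := by omega
  set a : Fin n := ⟨0, h0⟩
  set b : Fin n := ⟨1, h1⟩
  set c : Fin n := ⟨2, h2⟩
  set d : Fin n := ⟨3, h3⟩
  have hab : a ≠ b := by simp [a, b, Fin.ext_iff]
  have hac : a ≠ c := by simp [a, c, Fin.ext_iff]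
  have had : a ≠ d := by simp [a, d, Fin.ext_iff]
  have hbc : b ≠ c := by simp [b, c, Fin.ext_iff]
  have hbd : b ≠ d := by simp [b, d, Fin.ext_iff]
  have hcd : c ≠ d := by simp [c, d, Fin.ext_iff]
  set τ : Equiv.Perm (Fin n) := Equiv.swap a b with hτ
  set σ₂ : Equiv.Perm (Fin n) := Equiv.swap b d * Equiv.swap d c with hσ₂
  set σ₃ : Equiv.Perm (Fin n) := Equiv.swap a b * Equiv.swap c d with hσ₃
  set σ₄ : Equiv.Perm (Fin n) := Equiv.swap a b * Equiv.swap b d with hσ₄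
  set σ₅ : Equiv.Perm (Fin n) := Equiv.swap a c * Equiv.swap c b with hσ₅
  set σ₆ : Equiv.Perm (Fin n) := Equiv.swap a c * Equiv.swap c d with hσ₆
  -- the key linear identity
  have hkey : ρ τ = (2 : ℂ)⁻¹ • (ρ 1 - ρ σ₂ + ρ σ₃ + ρ σ₄ + ρ σ₅ - ρ σ₆) := by
    have entry : ∀ (π : Equiv.Perm (Fin n)) (i j : Fin n),
        π.permMatrix ℂ i j = if π i = j then 1 else 0 := by
      intro π i j
      simp [Equiv.Perm.permMatrix, PEquiv.toMatrix_apply, Equiv.toPEquiv_apply]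
    refine Prod.ext (by norm_num) ?_
    ext i j
    rw [hρ]
    simp only [Prod.snd_sub, Prod.snd_add, Prod.smul_snd, Matrix.sub_apply, Matrix.add_apply,
      Matrix.smul_apply, entry, smul_eq_mul]
    by_cases hia : i = a
    · subst hia
      rw [hτ, hσ₂, hσ₃, hσ₄, hσ₅, hσ₆]
      simp only [Equiv.Perm.mul_apply, Equiv.Perm.one_apply,
        Equiv.swap_apply_left, Equiv.swap_apply_right, Equiv.swap_apply_of_ne_of_ne,
        hab, hac, had, hbc, hbd, hcd, hab.symm, hac.symm, had.symm, hbc.symm, hbd.symm, hcd.symm,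
        ne_eq, not_false_eq_true]
      split_ifs <;> simp_all <;> norm_num
    · by_cases hib : i = b
      · subst hib
        rw [hτ, hσ₂, hσ₃, hσ₄, hσ₅, hσ₆]
        simp only [Equiv.Perm.mul_apply, Equiv.Perm.one_apply,
        Equiv.swap_apply_left, Equiv.swap_apply_right, Equiv.swap_apply_of_ne_of_ne,
        hab, hac, had, hbc, hbd, hcd, hab.symm, hac.symm, had.symm, hbc.symm, hbd.symm, hcd.symm,
        ne_eq, not_false_eq_true]
        split_ifs <;> simp_all <;> norm_num
      · by_cases hic : i = c
        · subst hic
          rw [hτ, hσ₂, hσ₃, hσ₄, hσ₅, hσ₆]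
          simp only [Equiv.Perm.mul_apply, Equiv.Perm.one_apply,
        Equiv.swap_apply_left, Equiv.swap_apply_right, Equiv.swap_apply_of_ne_of_ne,
        hab, hac, had, hbc, hbd, hcd, hab.symm, hac.symm, had.symm, hbc.symm, hbd.symm, hcd.symm,
        ne_eq, not_false_eq_true]
          split_ifs <;> simp_all <;> ring
        · by_cases hid : i = d
          · subst hid
            rw [hτ, hσ₂, hσ₃, hσ₄, hσ₅, hσ₆]
            simp only [Equiv.Perm.mul_apply, Equiv.Perm.one_apply,
        Equiv.swap_apply_left, Equiv.swap_apply_right, Equiv.swap_apply_of_ne_of_ne,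
        hab, hac, had, hbc, hbd, hcd, hab.symm, hac.symm, had.symm, hbc.symm, hbd.symm, hcd.symm,
        ne_eq, not_false_eq_true]
            split_ifs <;> simp_all <;> norm_num
          · rw [hτ, hσ₂, hσ₃, hσ₄, hσ₅, hσ₆]
            simp only [Equiv.Perm.mul_apply, Equiv.Perm.one_apply,
        Equiv.swap_apply_left, Equiv.swap_apply_right, Equiv.swap_apply_of_ne_of_ne,
        hab, hac, had, hbc, hbd, hcd, hab.symm, hac.symm, had.symm, hbc.symm, hbd.symm, hcd.symm,
        hia, hib, hic, hid,
        ne_eq, not_false_eq_true]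
            split_ifs <;> simp_all <;> norm_num
  -- ρ τ is in S
  have hτS : ρ τ ∈ S := by
    rw [hkey]
    have m1 : ρ 1 ∈ S := hevens 1 (by simp)
    have m2 : ρ σ₂ ∈ S := hevens σ₂ (by rw [hσ₂]; simp [sign_swap hbd, sign_swap hcd.symm])
    have m3 : ρ σ₃ ∈ S := hevens σ₃ (by rw [hσ₃]; simp [sign_swap hab, sign_swap hcd])
    have m4 : ρ σ₄ ∈ S := hevens σ₄ (by rw [hσ₄]; simp [sign_swap hab, sign_swap hbd])
    have m5 : ρ σ₅ ∈ S := hevens σ₅ (by rw [hσ₅]; simp [sign_swap hac, sign_swap hbc.symm])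
    have m6 : ρ σ₆ ∈ S := hevens σ₆ (by rw [hσ₆]; simp [sign_swap hac, sign_swap hcd])
    exact SMulMemClass.smul_mem _ (sub_mem (add_mem (add_mem (add_mem (sub_mem m1 m2) m3) m4) m5) m6)
  refine le_antisymm (StarAlgebra.adjoin_le ?_) (StarAlgebra.adjoin_le ?_)
  · exact (Set.image_subset_range _ _).trans (StarAlgebra.subset_adjoin ℂ _)
  · rintro x ⟨σ, rfl⟩
    by_cases hσ : sign σ = 1
    · exact hevens σ hσ
    · have hσ' : sign σ = -1 := by
        rcases Int.units_eq_one_or (sign σ) with h | h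
        · exact absurd h hσ
        · exact h
      have heven : sign (τ * σ) = 1 := by
        rw [Equiv.Perm.sign_mul, hσ', hτ, Equiv.Perm.sign_swap hab]
        norm_num
      have : ρ (τ * σ) * ρ τ = ρ σ := by
        rw [hmul]
        congr 1
        rw [← mul_assoc, hτ, Equiv.swap_mul_self, one_mul]
      rw [← this]
      exact S.mul_mem (hevens _ heven) hτS
end

section
/- Let δ_0, δ_1, δ_{-1} be unitaries with δ_1 δ_{-1} = δ_0 = 1 in a unital C*-algebra containing a copy of C(X) (X compact), with δ_1 f δ_{-1} = f ∘ T^{-1} for a homeomorphism T of X. If A ⊆ X is clopen with A ∩ T(A) = ∅, then (1 − δ_1)·1_A·(1 − δ_{-1}) = 1 − (1_{(A ∪ T(A))^c} + 1_{T(A)} δ_1 + 1_A δ_{-1}), and the element 1_{(A∪T(A))^c} + 1_{T(A)}δ_1 + 1_A δ_{-1} is a unitary. -/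
lemma crossed_aux {R : Type*} [Ring R] (p q r d e : R)
    (hpp : p*p = p) (hqq : q*q = q) (hrr : r*r = r)
    (hpq : p*q = 0) (hqp : q*p = 0) (hpr : p*r = 0) (hrp : r*p = 0)
    (hqr : q*r = 0) (hrq : r*q = 0)
    (hsum : p + q + r = 1) (hde : d*e = 1) (hed : e*d = 1)
    (h1 : d*p = q*d) (h2 : p*e = e*q) :
    (1-d)*p*(1-e) = 1 - (r + q*d + p*e)
      ∧ (r + e*q + d*p) * (r + q*d + p*e) = 1
      ∧ (r + q*d + p*e) * (r + e*q + d*p) = 1 := by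
  refine ⟨?_, ?_, ?_⟩
  · have E : (1-d)*p*(1-e) = p - d*p - p*e + d*p*e := by noncomm_ring
    rw [E, h1, show q*d*e = q*(d*e) from by noncomm_ring, hde, mul_one, ← hsum]
    abel
  · have E : (r + e*q + d*p) * (r + q*d + p*e)
        = r*r + r*(q*d) + r*(p*e)
        + (e*q*r + e*(q*q)*d + e*q*(p*e))
        + (d*p*r + d*p*(q*d) + d*(p*p)*e) := by noncomm_ring
    rw [E, hrr, hqq, hpp]
    have t2 : r*(q*d) = 0 := by rw [← mul_assoc, hrq, zero_mul]
    have t3 : r*(p*e) = 0 := by rw [← mul_assoc, hrp, zero_mul]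
    have t4 : e*q*r = 0 := by rw [mul_assoc, hqr, mul_zero]
    have t5 : e*q*d = p := by
      rw [← h2]; rw [show p*e*d = p*(e*d) from by noncomm_ring, hed, mul_one]
    have t6 : e*q*(p*e) = 0 := by
      rw [show e*q*(p*e) = e*(q*p)*e from by noncomm_ring, hqp, mul_zero, zero_mul]
    have t7 : d*p*r = 0 := by rw [mul_assoc, hpr, mul_zero]
    have t8 : d*p*(q*d) = 0 := by
      rw [show d*p*(q*d) = d*(p*q)*d from by noncomm_ring, hpq, mul_zero, zero_mul]
    have t9 : d*p*e = q := by
      rw [h1, show q*d*e = q*(d*e) from by noncomm_ring, hde, mul_one]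
    rw [t2, t3, t4, t5, t6, t7, t8, t9, ← hsum]
    abel
  · have E : (r + q*d + p*e) * (r + e*q + d*p)
        = r*r + r*(e*q) + r*(d*p)
        + (q*d*r + q*(d*e)*q + q*d*(d*p))
        + (p*e*r + p*e*(e*q) + p*(e*d)*p) := by noncomm_ring
    rw [E, hrr, hde, hed, mul_one, mul_one, hqq, hpp]
    have t2 : r*(e*q) = 0 := by rw [← h2, ← mul_assoc, hrp, zero_mul]
    have t3 : r*(d*p) = 0 := by rw [h1, ← mul_assoc, hrq, zero_mul]
    have t4 : q*d*r = 0 := by rw [← h1, mul_assoc, hpr, mul_zero]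
    have t6 : q*d*(d*p) = 0 := by
      rw [h1, show q*d*(q*d) = q*(d*q)*d from by noncomm_ring]
      rw [show q*(d*q)*d = (q*d)*q*d from by noncomm_ring, ← h1,
        show d*p*q*d = d*(p*q)*d from by noncomm_ring, hpq, mul_zero, zero_mul]
    have t7 : p*e*r = 0 := by rw [h2, mul_assoc, hqr, mul_zero]
    have t8 : p*e*(e*q) = 0 := by
      have hpep : p*e*p = 0 := by rw [h2, mul_assoc, hqp, mul_zero]
      rw [← h2, show p*e*(p*e) = (p*e*p)*e from by noncomm_ring, hpep, zero_mul]
    rw [t2, t3, t4, t6, t7, t8, ← hsum]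
    abel

open scoped Classical

/-- In a unital C*-algebra containing a copy `ι` of `C(X)` and unitaries `δ₁, δ₋₁`
(with `δ₁δ₋₁ = δ₋₁δ₁ = 1`) implementing a homeomorphism `T` via the covariance relation
`δ₁ ι(f) δ₋₁ = ι(f ∘ T⁻¹)`, if `A ⊆ X` is clopen with `A ∩ T(A) = ∅` then
`(1 - δ₁)·1_A·(1 - δ₋₁) = 1 - (1_{(A ∪ T(A))ᶜ} + 1_{T(A)} δ₁ + 1_A δ₋₁)`, and
`1_{(A ∪ T(A))ᶜ} + 1_{T(A)} δ₁ + 1_A δ₋₁` is a unitary. -/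
theorem crossed_product_identity_and_unitary
    (X : Type*) [TopologicalSpace X] [CompactSpace X] (T : X ≃ₜ X)
    (R : Type*) [CStarAlgebra R] (ι : C(X, ℂ) →⋆ₐ[ℂ] R)
    (d₁ dm : R) (hu₁ : d₁ ∈ unitary R) (hum : dm ∈ unitary R)
    (hinv : d₁ * dm = 1) (hinv' : dm * d₁ = 1)
    (hcov : ∀ f : C(X, ℂ), d₁ * ι f * dm = ι (f.comp (T.symm : C(X, X))))
    (A : Set X) (hA : IsClopen A) (hdisj : A ∩ (⇑T '' A) = ∅)
    (χA χTA χC : C(X, ℂ))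
    (hχA : ∀ x : X, χA x = if x ∈ A then 1 else 0)
    (hχTA : ∀ x : X, χTA x = if x ∈ ⇑T '' A then 1 else 0)
    (hχC : ∀ x : X, χC x = if x ∈ (A ∪ ⇑T '' A)ᶜ then 1 else 0) :
    (1 - d₁) * ι χA * (1 - dm) = 1 - (ι χC + ι χTA * d₁ + ι χA * dm) ∧
      (ι χC + ι χTA * d₁ + ι χA * dm) ∈ unitary R := by
  -- basic membership facts
  have hnAB : ∀ x : X, ¬(x ∈ A ∧ x ∈ ⇑T '' A) := by
    intro x ⟨h1, h2⟩
    have : x ∈ A ∩ (⇑T '' A) := ⟨h1, h2⟩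
    rw [hdisj] at this
    exact this
  have hmem : ∀ x : X, x ∈ ⇑T '' A ↔ T.symm x ∈ A := by
    intro x
    constructor
    · rintro ⟨a, ha, rfl⟩; simpa using ha
    · intro h; exact ⟨T.symm x, h, by simp⟩
  -- pointwise lemmas about the characteristic functions
  have hPP : χA * χA = χA := by
    ext x; simp only [ContinuousMap.mul_apply, hχA x]; split_ifs <;> simp
  have hQQ : χTA * χTA = χTA := by
    ext x; simp only [ContinuousMap.mul_apply, hχTA x]; split_ifs <;> simp
  have hRR : χC * χC = χC := by
    ext x; simp only [ContinuousMap.mul_apply, hχC x]; split_ifs <;> simp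
  have hCA : ∀ x : X, x ∈ (A ∪ ⇑T '' A)ᶜ → x ∉ A := by
    intro x hx h; exact hx (Or.inl h)
  have hCTA : ∀ x : X, x ∈ (A ∪ ⇑T '' A)ᶜ → x ∉ ⇑T '' A := by
    intro x hx h; exact hx (Or.inr h)
  have hPQ : χA * χTA = 0 := by
    ext x
    simp only [ContinuousMap.mul_apply, ContinuousMap.zero_apply, hχA x, hχTA x]
    by_cases h1 : x ∈ A
    · rw [if_pos h1, if_neg (fun h => hnAB x ⟨h1, h⟩), mul_zero]
    · rw [if_neg h1, zero_mul]
  have hQP : χTA * χA = 0 := by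
    ext x
    simp only [ContinuousMap.mul_apply, ContinuousMap.zero_apply, hχA x, hχTA x]
    by_cases h1 : x ∈ A
    · rw [if_neg (fun h => hnAB x ⟨h1, h⟩), zero_mul]
    · rw [if_neg h1, mul_zero]
  have hPR : χA * χC = 0 := by
    ext x
    simp only [ContinuousMap.mul_apply, ContinuousMap.zero_apply, hχA x, hχC x]
    by_cases h1 : x ∈ A
    · rw [if_neg (fun h => hCA x h h1), mul_zero]
    · rw [if_neg h1, zero_mul]
  have hRP : χC * χA = 0 := by
    ext x
    simp only [ContinuousMap.mul_apply, ContinuousMap.zero_apply, hχA x, hχC x]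
    by_cases h1 : x ∈ A
    · rw [if_neg (fun h => hCA x h h1), zero_mul]
    · rw [if_neg h1, mul_zero]
  have hQR : χTA * χC = 0 := by
    ext x
    simp only [ContinuousMap.mul_apply, ContinuousMap.zero_apply, hχTA x, hχC x]
    by_cases h1 : x ∈ ⇑T '' A
    · rw [if_neg (fun h => hCTA x h h1), mul_zero]
    · rw [if_neg h1, zero_mul]
  have hRQ : χC * χTA = 0 := by
    ext x
    simp only [ContinuousMap.mul_apply, ContinuousMap.zero_apply, hχTA x, hχC x]
    by_cases h1 : x ∈ ⇑T '' A
    · rw [if_neg (fun h => hCTA x h h1), zero_mul]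
    · rw [if_neg h1, mul_zero]
  have hsumf : χA + χTA + χC = 1 := by
    ext x
    simp only [ContinuousMap.add_apply, ContinuousMap.one_apply, hχA x, hχTA x, hχC x]
    by_cases h1 : x ∈ A
    · have hc : x ∉ (A ∪ ⇑T '' A)ᶜ := fun h => h (Or.inl h1)
      rw [if_pos h1, if_neg (fun h => hnAB x ⟨h1, h⟩), if_neg hc]
      ring
    · by_cases h2 : x ∈ ⇑T '' A
      · have hc : x ∉ (A ∪ ⇑T '' A)ᶜ := fun h => h (Or.inr h2)
        rw [if_neg h1, if_pos h2, if_neg hc]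
        ring
      · have hc : x ∈ (A ∪ ⇑T '' A)ᶜ := fun h => h.elim h1 h2
        rw [if_neg h1, if_neg h2, if_pos hc]
        ring
  have hstarA : star χA = χA := by
    ext x; simp only [ContinuousMap.star_apply, hχA x]; split_ifs <;> simp
  have hstarTA : star χTA = χTA := by
    ext x; simp only [ContinuousMap.star_apply, hχTA x]; split_ifs <;> simp
  have hcompA : χA.comp (T.symm : C(X, X)) = χTA := by
    ext x
    have hcoe : ((T.symm : C(X, X)) x) = T.symm x := rfl
    rw [ContinuousMap.comp_apply, hχA, hχTA, hcoe]
    by_cases h : T.symm x ∈ A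
    · rw [if_pos h, if_pos ((hmem x).mpr h)]
    · rw [if_neg h, if_neg (fun hh => h ((hmem x).mp hh))]
  -- star facts for the unitaries
  have hsd1 : star d₁ = dm := by
    calc star d₁ = star d₁ * (d₁ * dm) := by rw [hinv, mul_one]
      _ = (star d₁ * d₁) * dm := by rw [mul_assoc]
      _ = dm := by rw [(Unitary.mem_iff.mp hu₁).1, one_mul]
  have hsdm : star dm = d₁ := by
    calc star dm = star dm * (dm * d₁) := by rw [hinv', mul_one]
      _ = (star dm * dm) * d₁ := by rw [mul_assoc]
      _ = d₁ := by rw [(Unitary.mem_iff.mp hum).1, one_mul]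
  -- covariance consequences
  have h1 : d₁ * ι χA = ι χTA * d₁ := by
    have hc : d₁ * ι χA * dm = ι χTA := by rw [hcov χA, hcompA]
    calc d₁ * ι χA = d₁ * ι χA * (dm * d₁) := by rw [hinv', mul_one]
      _ = (d₁ * ι χA * dm) * d₁ := by noncomm_ring
      _ = ι χTA * d₁ := by rw [hc]
  have h2 : ι χA * dm = dm * ι χTA := by
    have := congrArg star h1
    rwa [star_mul, star_mul, ← map_star, ← map_star, hstarA, hstarTA, hsd1] at this
  obtain ⟨hid, hl, hr⟩ := crossed_aux (ι χA) (ι χTA) (ι χC) d₁ dm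
    (by rw [← map_mul, hPP]) (by rw [← map_mul, hQQ]) (by rw [← map_mul, hRR])
    (by rw [← map_mul, hPQ, map_zero]) (by rw [← map_mul, hQP, map_zero])
    (by rw [← map_mul, hPR, map_zero]) (by rw [← map_mul, hRP, map_zero])
    (by rw [← map_mul, hQR, map_zero]) (by rw [← map_mul, hRQ, map_zero])
    (by rw [← map_add, ← map_add, hsumf, map_one]) hinv hinv' h1 h2
  refine ⟨hid, ?_⟩
  rw [Unitary.mem_iff]
  have hstaru : star (ι χC + ι χTA * d₁ + ι χA * dm)
      = ι χC + dm * ι χTA + d₁ * ι χA := by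
    have hstarC : star χC = χC := by
      ext x; simp only [ContinuousMap.star_apply, hχC x]; split_ifs <;> simp
    rw [star_add, star_add, star_mul, star_mul, ← map_star, ← map_star, ← map_star,
      hstarA, hstarTA, hstarC, hsd1, hsdm]
  rw [hstaru]
  exact ⟨hl, hr⟩
end
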